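/- In any run of the greedy algorithm on a 2-regular instance, suppose the assignment of an arriving request creates a 4-0 crossing on a pair of requests (R_x, R_y), while at the time of the placement some free slot existed whose choice would not have created any 4-0 crossing (a non-forced 4-0 crossing). Then there are at least two unavoidable crossings identifiable with this pair: the sum over all requests R' of the instance distinct from R_x and R_y of mincross(R',R_x) + mincross(R',R_y) is at least 2. -/

import Mathlib

/- Slotted OSCM-2 model.  Slots and vertices are indexed by `Fin n` with the natural
linear order.  A request is an unordered pair of two distinct vertices, stored with
`fst < snd`. -/

structure Request (n : ℕ) where
  fst : Fin n
  snd : Fin n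
  lt : fst < snd

/-- Two edges `(s,u)` and `(s',u')` cross iff `(s < s' ∧ u' < u) ∨ (s' < s ∧ u < u')`. -/
def edgesCross {n : ℕ} (s s' u u' : Fin n) : Prop :=
  (s < s' ∧ u' < u) ∨ (s' < s ∧ u < u')

instance {n : ℕ} (s s' u u' : Fin n) : Decidable (edgesCross s s' u u') := by
  unfold edgesCross; infer_instance

/-- Number of crossing pairs of edges between request `R` placed at slot `s` and
request `R'` placed at slot `s'`. -/
def pairCross {n : ℕ} (R R' : Request n) (s s' : Fin n) : ℕ :=
  (if edgesCross s s' R.fst R'.fst then 1 else 0) +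
  (if edgesCross s s' R.fst R'.snd then 1 else 0) +
  (if edgesCross s s' R.snd R'.fst then 1 else 0) +
  (if edgesCross s s' R.snd R'.snd then 1 else 0)

/-- Crossing number of an assignment `σ` for the instance `R`. -/
def cr {n : ℕ} (R : Fin n → Request n) (σ : Fin n → Fin n) : ℕ :=
  ∑ p ∈ Finset.univ.filter (fun p : Fin n × Fin n => p.1 < p.2),
    pairCross (R p.1) (R p.2) (σ p.1) (σ p.2)

/-- Minimum crossing number over all assignments (bijections). -/
noncomputable def opt {n : ℕ} (R : Fin n → Request n) : ℕ :=
  sInf {c : ℕ | ∃ σ : Equiv.Perm (Fin n), cr R (⇑σ) = c}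

/-- `crossLower R R'`: number of crossings between the edges of `R` and `R'` when
`R` gets the smaller of the two slots. -/
def crossLower {n : ℕ} (R R' : Request n) : ℕ :=
  (if R'.fst < R.fst then 1 else 0) + (if R'.snd < R.fst then 1 else 0) +
  (if R'.fst < R.snd then 1 else 0) + (if R'.snd < R.snd then 1 else 0)

/-- Pairwise minimum number of crossings between two requests. -/
def mincross {n : ℕ} (R R' : Request n) : ℕ :=
  min (crossLower R R') (crossLower R' R)

/-- The instance is 2-regular: every vertex occurs exactly twice among the requests,
counted with multiplicity. -/
def TwoRegular {n : ℕ} (R : Fin n → Request n) : Prop :=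
  ∀ v : Fin n,
    (∑ i : Fin n, ((if (R i).fst = v then 1 else 0) + (if (R i).snd = v then 1 else 0))) = 2

/-- Degree of vertex `v` after the first `k` requests: its number of occurrences
among `R_0, …, R_{k-1}`. -/
def degAt {n : ℕ} (R : Fin n → Request n) (k : ℕ) (v : Fin n) : ℕ :=
  ∑ i ∈ Finset.univ.filter (fun i : Fin n => i.1 < k),
    ((if (R i).fst = v then 1 else 0) + (if (R i).snd = v then 1 else 0))

/-- Free (unfulfilled) slots after the first `k` requests have been assigned by `σ`. -/
def freeAt {n : ℕ} (R : Fin n → Request n) (σ : Fin n → Fin n) (k : ℕ) : Finset (Fin n) :=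
  Finset.univ \ (Finset.univ.filter (fun i : Fin n => i.1 < k)).image σ

/-- `L_V`: the nondecreasing list in which each vertex `v` appears `2 - degAt v` times. -/
def vertexList {n : ℕ} (R : Fin n → Request n) (k : ℕ) : List (Fin n) :=
  Multiset.sort (∑ v : Fin n, Multiset.replicate (2 - degAt R k v) v) (· ≤ ·)

/-- `L_S`: the nondecreasing list containing each free slot twice. -/
def slotList {n : ℕ} (R : Fin n → Request n) (σ : Fin n → Fin n) (k : ℕ) : List (Fin n) :=
  Multiset.sort (∑ s ∈ freeAt R σ k, Multiset.replicate 2 s) (· ≤ ·)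

/-- The propagation arrows of the partial state: the pairs `(L_V(i), L_S(i))`. -/
def arrows {n : ℕ} (R : Fin n → Request n) (σ : Fin n → Fin n) (k : ℕ) :
    List (Fin n × Fin n) :=
  (vertexList R k).zip (slotList R σ k)

/-- An arrow `(v,s)` crosses an edge `(s₁,u)` iff `(s₁ < s ∧ v < u) ∨ (s < s₁ ∧ u < v)`. -/
def arrowEdgeCross {n : ℕ} (v s s₁ u : Fin n) : Prop :=
  (s₁ < s ∧ v < u) ∨ (s < s₁ ∧ u < v)

instance {n : ℕ} (v s s₁ u : Fin n) : Decidable (arrowEdgeCross v s s₁ u) := by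
  unfold arrowEdgeCross; infer_instance

/-- Total number of edge–edge crossings plus edge–propagation-arrow crossings of
the partial state after the first `k` requests are assigned by `σ`. -/
def partialCost {n : ℕ} (R : Fin n → Request n) (σ : Fin n → Fin n) (k : ℕ) : ℕ :=
  (∑ p ∈ Finset.univ.filter (fun p : Fin n × Fin n => p.1 < p.2 ∧ p.2.1 < k),
      pairCross (R p.1) (R p.2) (σ p.1) (σ p.2)) +
  ∑ i ∈ Finset.univ.filter (fun i : Fin n => i.1 < k),
    ((arrows R σ k).map (fun a =>
        (if arrowEdgeCross a.1 a.2 (σ i) (R i).fst then 1 else 0) +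
        (if arrowEdgeCross a.1 a.2 (σ i) (R i).snd then 1 else 0))).sum

/-- A run of the greedy algorithm: each arriving request `R_k` is assigned to a free
slot minimizing the total number of edge–edge plus edge–arrow crossings of the
resulting partial state. -/
def GreedyRun {n : ℕ} (R : Fin n → Request n) (σ : Equiv.Perm (Fin n)) : Prop :=
  ∀ (k : Fin n) (s : Fin n), s ∈ freeAt R (⇑σ) k.1 →
    partialCost R (⇑σ) (k.1 + 1) ≤ partialCost R (Function.update (⇑σ) k s) (k.1 + 1)

/-- Non-forced 4-0 crossings come with two unavoidable crossings: if the assignment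
of the arriving request `R k` creates a 4-0 crossing with a previously assigned
request `R i` although some free slot would have created no 4-0 crossing, then the
number of unavoidable crossings between other requests and the pair `(R i, R k)`
is at least `2`. -/

private lemma sum_c {n : ℕ} (R : Fin n → Request n) (hR : TwoRegular R) (S : Finset (Fin n)) :
    ∑ j : Fin n, ((if (R j).fst ∈ S then 1 else 0) + (if (R j).snd ∈ S then 1 else 0)) =
      2 * S.card := by
  have key : ∀ j : Fin n,
      ((if (R j).fst ∈ S then 1 else 0) + (if (R j).snd ∈ S then 1 else 0) : ℕ)
        = ∑ v ∈ S, ((if (R j).fst = v then 1 else 0) + (if (R j).snd = v then 1 else 0)) := by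
    intro j
    rw [Finset.sum_add_distrib]
    simp [Finset.sum_ite_eq]
  simp_rw [key]
  rw [Finset.sum_comm]
  rw [Finset.sum_congr rfl (fun v _ => hR v)]
  simp [mul_comm]

private lemma even_cut {n : ℕ} (R : Fin n → Request n) (hR : TwoRegular R) (S : Finset (Fin n)) :
    Even ((Finset.univ.filter (fun j : Fin n =>
      ((if (R j).fst ∈ S then 1 else 0) + (if (R j).snd ∈ S then 1 else 0) : ℕ) = 1)).card) := by
  have hsum := sum_c R hR S
  rw [Nat.even_iff, Finset.card_filter]
  have hmod : ∀ j : Fin n,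
      (if ((if (R j).fst ∈ S then 1 else 0) + (if (R j).snd ∈ S then 1 else 0) : ℕ) = 1
        then (1:ℕ) else 0)
      = ((if (R j).fst ∈ S then 1 else 0) + (if (R j).snd ∈ S then 1 else 0)) % 2 := by
    intro j; by_cases h1 : (R j).fst ∈ S <;> by_cases h2 : (R j).snd ∈ S <;> simp [h1, h2]
  rw [Finset.sum_congr rfl (fun j _ => hmod j), ← Finset.sum_nat_mod, hsum]
  omega

private lemma main_aux {n : ℕ} (R : Fin n → Request n) (hR : TwoRegular R) (a b : Fin n)
    (hab : a ≠ b) (h : (R a).snd < (R b).fst) :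
    2 ≤ ∑ j ∈ Finset.univ.filter (fun j : Fin n => j ≠ a ∧ j ≠ b),
        (mincross (R j) (R a) + mincross (R j) (R b)) := by
  classical
  set x1 := (R a).fst with hx1
  set y2 := (R b).snd with hy2
  have hxa : (R a).fst < (R a).snd := (R a).lt
  have hxb : (R b).fst < (R b).snd := (R b).lt
  -- the left cut
  set A : Finset (Fin n) :=
    Finset.univ.filter (fun j : Fin n => (R j).fst ≤ x1 ∧ x1 < (R j).snd) with hA
  have hAeven : Even A.card := by
    have := even_cut R hR (Finset.Iic x1)
    have hEq : Finset.univ.filter (fun j : Fin n =>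
        ((if (R j).fst ∈ Finset.Iic x1 then 1 else 0) +
          (if (R j).snd ∈ Finset.Iic x1 then 1 else 0) : ℕ) = 1) = A := by
      apply Finset.filter_congr
      intro j _
      have hlt := (R j).lt
      by_cases h1 : (R j).fst ≤ x1 <;> by_cases h2 : (R j).snd ≤ x1
      · simp [Finset.mem_Iic, h1, h2, not_lt.mpr h2]
      · simp [Finset.mem_Iic, h1, h2, lt_of_not_ge h2]
      · exact absurd (le_of_lt (lt_of_lt_of_le hlt h2)) h1
      · simp [Finset.mem_Iic, h1, h2]
    rwa [hEq] at this
  -- the right cut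
  set B : Finset (Fin n) :=
    Finset.univ.filter (fun j : Fin n => (R j).fst < y2 ∧ y2 ≤ (R j).snd) with hB
  have hBeven : Even B.card := by
    have := even_cut R hR (Finset.Iio y2)
    have hEq : Finset.univ.filter (fun j : Fin n =>
        ((if (R j).fst ∈ Finset.Iio y2 then 1 else 0) +
          (if (R j).snd ∈ Finset.Iio y2 then 1 else 0) : ℕ) = 1) = B := by
      apply Finset.filter_congr
      intro j _
      have hlt := (R j).lt
      by_cases h1 : (R j).fst < y2 <;> by_cases h2 : (R j).snd < y2
      · simp [Finset.mem_Iio, h1, h2, not_le.mpr h2]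
      · simp [Finset.mem_Iio, h1, h2, le_of_not_gt h2]
      · exact absurd (lt_trans hlt h2) h1
      · simp [Finset.mem_Iio, h1, h2]
    rwa [hEq] at this
  have haA : a ∈ A := by
    simp only [hA, Finset.mem_filter, Finset.mem_univ, true_and]
    exact ⟨le_refl _, hxa⟩
  have hbA : b ∉ A := by
    simp only [hA, Finset.mem_filter, Finset.mem_univ, true_and]
    intro hc
    exact absurd (lt_of_lt_of_le (lt_trans hxa h) hc.1) (lt_irrefl _)
  have hbB : b ∈ B := by
    simp only [hB, Finset.mem_filter, Finset.mem_univ, true_and]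
    exact ⟨hxb, le_refl _⟩
  have haB : a ∉ B := by
    simp only [hB, Finset.mem_filter, Finset.mem_univ, true_and]
    intro hc
    exact absurd (lt_of_lt_of_le (lt_trans h hxb) hc.2) (lt_irrefl _)
  have hAcard : 1 < A.card := by
    rcases hAeven with ⟨m, hm⟩
    have : 0 < A.card := Finset.card_pos.mpr ⟨a, haA⟩
    omega
  have hBcard : 1 < B.card := by
    rcases hBeven with ⟨m, hm⟩
    have : 0 < B.card := Finset.card_pos.mpr ⟨b, hbB⟩
    omega
  obtain ⟨ja, hjaA, hjaa⟩ := Finset.exists_mem_ne hAcard a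
  obtain ⟨jb, hjbB, hjbb⟩ := Finset.exists_mem_ne hBcard b
  have hjab : ja ≠ b := fun hc => hbA (hc ▸ hjaA)
  have hjba : jb ≠ a := fun hc => haB (hc ▸ hjbB)
  -- mincross bounds
  have hmA : ∀ j ∈ A, 1 ≤ mincross (R j) (R a) := by
    intro j hj
    simp only [hA, Finset.mem_filter, Finset.mem_univ, true_and] at hj
    have h1 : (R a).fst < (R j).snd := hj.2
    have h2 : (R j).fst < (R a).snd := lt_of_le_of_lt hj.1 hxa
    unfold mincross crossLower
    rw [le_min_iff]
    constructor
    · simp only [h1, if_true]; omega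
    · simp only [h2, if_true]; omega
  have hmB : ∀ j ∈ B, 1 ≤ mincross (R j) (R b) := by
    intro j hj
    simp only [hB, Finset.mem_filter, Finset.mem_univ, true_and] at hj
    have h1 : (R b).fst < (R j).snd := lt_of_lt_of_le hxb hj.2
    have h2 : (R j).fst < (R b).snd := hj.1
    unfold mincross crossLower
    rw [le_min_iff]
    constructor
    · simp only [h1, if_true]; omega
    · simp only [h2, if_true]; omega
  set T : Finset (Fin n) := Finset.univ.filter (fun j : Fin n => j ≠ a ∧ j ≠ b) with hT
  have hjaT : ja ∈ T := by
    simp only [hT, Finset.mem_filter, Finset.mem_univ, true_and]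
    exact ⟨hjaa, hjab⟩
  have hjbT : jb ∈ T := by
    simp only [hT, Finset.mem_filter, Finset.mem_univ, true_and]
    exact ⟨hjba, hjbb⟩
  by_cases hjj : ja = jb
  · have h2' : 2 ≤ mincross (R ja) (R a) + mincross (R ja) (R b) := by
      have := hmA ja hjaA
      have := hmB ja (hjj ▸ hjbB)
      omega
    calc 2 ≤ mincross (R ja) (R a) + mincross (R ja) (R b) := h2'
      _ ≤ _ := Finset.single_le_sum (f := fun j => mincross (R j) (R a) + mincross (R j) (R b))
          (fun j _ => Nat.zero_le _) hjaT
  · have hsub : ({ja, jb} : Finset (Fin n)) ⊆ T := by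
      intro x hx
      rcases Finset.mem_insert.mp hx with h' | h'
      · exact h' ▸ hjaT
      · exact (Finset.mem_singleton.mp h') ▸ hjbT
    calc 2 ≤ (mincross (R ja) (R a) + mincross (R ja) (R b)) +
              (mincross (R jb) (R a) + mincross (R jb) (R b)) := by
          have := hmA ja hjaA
          have := hmB jb hjbB
          omega
      _ = ∑ j ∈ ({ja, jb} : Finset (Fin n)),
            (mincross (R j) (R a) + mincross (R j) (R b)) := by
          rw [Finset.sum_pair hjj]
      _ ≤ _ := Finset.sum_le_sum_of_subset hsub

theorem nonforced_40_two_unavoidable {n : ℕ} (R : Fin n → Request n)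
    (hR : TwoRegular R) (σ : Equiv.Perm (Fin n)) (hσ : GreedyRun R σ)
    (k i : Fin n) (hik : i.1 < k.1)
    (h40 : ((R i).snd < (R k).fst ∧ σ k < σ i) ∨ ((R k).snd < (R i).fst ∧ σ i < σ k))
    (hnonforced : ∃ s ∈ freeAt R ⇑σ k.1, ∀ i' : Fin n, i'.1 < k.1 →
      ¬ (((R i').snd < (R k).fst ∧ s < σ i') ∨ ((R k).snd < (R i').fst ∧ σ i' < s))) :
    2 ≤ ∑ j ∈ Finset.univ.filter (fun j : Fin n => j ≠ i ∧ j ≠ k),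
        (mincross (R j) (R i) + mincross (R j) (R k)) := by

  have hik' : i ≠ k := fun hc => absurd hik (by rw [hc]; exact lt_irrefl _)
  rcases h40 with ⟨h, _⟩ | ⟨h, _⟩
  · exact main_aux R hR i k hik' h
  · have := main_aux R hR k i hik'.symm h
    calc 2 ≤ ∑ j ∈ Finset.univ.filter (fun j : Fin n => j ≠ k ∧ j ≠ i),
          (mincross (R j) (R k) + mincross (R j) (R i)) := this
      _ = ∑ j ∈ Finset.univ.filter (fun j : Fin n => j ≠ i ∧ j ≠ k),
          (mincross (R j) (R i) + mincross (R j) (R k)) := by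
          rw [show (Finset.univ.filter (fun j : Fin n => j ≠ k ∧ j ≠ i))
              = Finset.univ.filter (fun j : Fin n => j ≠ i ∧ j ≠ k) from by
            ext x; simp [and_comm]]
          exact Finset.sum_congr rfl (fun j _ => Nat.add_comm _ _)
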